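/- With notation as in the setup, let 0 ≤ k ≤ G−1 and let q be a k-semiroot of f, with primitive Newton–Puiseux parameterization X = U^{N/E_k}, Y = w(U) ∈ ℂ[[U]]. Then the coincidence order of f and q equals B_{k+1}/N; that is, max{ ord_S( y(ωS^{N/E_k}) − w(ω′S^N) ) : ω^N = 1, ω′^{N/E_k} = 1 } = (N/E_k)·B_{k+1}. Equivalently, f and q have equal sets of k-truncated Newton–Puiseux series: the terms of exponent strictly less than B_{k+1}/N in their Newton–Puiseux series coincide. -/

import Mathlib

noncomputable section

/-- The substitution `X ↦ T ^ n` on formal power series, described coefficientwise: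
the coefficient of `T ^ j` in `substPow n σ` is the coefficient of `X ^ (j / n)` in `σ`
when `n ∣ j`, and `0` otherwise. -/
def substPow (n : ℕ) (σ : PowerSeries ℂ) : PowerSeries ℂ :=
  PowerSeries.mk fun j => if n ∣ j then PowerSeries.coeff (j / n) σ else 0

/-- The power series `φ (T ^ n, w (T))`, for `φ ∈ ℂ[[X]][Y]` and `w ∈ ℂ[[T]]`. -/
def evalCurve (n : ℕ) (w : PowerSeries ℂ) (φ : Polynomial (PowerSeries ℂ)) :
    PowerSeries ℂ :=
  ∑ i ∈ Finset.range (φ.natDegree + 1), substPow n (φ.coeff i) * w ^ i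

/-- `X = T ^ n`, `Y = w (T)` is a primitive Newton–Puiseux parameterization of the curve
defined by `q ∈ ℂ[[X]][Y]`: one has `q (T ^ n, w (T)) = 0`, `w` has zero constant term, and
`gcd ({n} ∪ {j : coeff j w ≠ 0}) = 1`. -/
def IsNPParam (q : Polynomial (PowerSeries ℂ)) (n : ℕ) (w : PowerSeries ℂ) : Prop :=
  evalCurve n w q = 0 ∧ PowerSeries.constantCoeff w = 0 ∧
    ∀ d : ℕ, d ∣ n → (∀ j, PowerSeries.coeff j w ≠ 0 → d ∣ j) → d = 1

/-- `B 0, B 1, …, B G` is the characteristic sequence of the primitive Newton–Puiseux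
parameterization `X = T ^ n`, `Y = w (T)`:  `B 0 = n`; for `1 ≤ i ≤ G`, `B i` is the least
exponent `j` of a nonzero term of `w` such that `gcd (B 0, …, B (i-1)) ∤ j`; and `G` is the
least index for which `gcd (B 0, …, B G) = 1`. -/
def IsCharSeq (n : ℕ) (w : PowerSeries ℂ) (G : ℕ) (B : ℕ → ℕ) : Prop :=
  B 0 = n ∧
    (∀ i, 1 ≤ i → i ≤ G →
      B i = sInf {j : ℕ | PowerSeries.coeff j w ≠ 0 ∧ ¬ (Finset.range i).gcd B ∣ j}) ∧
    (Finset.range (G + 1)).gcd B = 1 ∧ ∀ i < G, (Finset.range (i + 1)).gcd B ≠ 1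

/-- `Ebar B i = gcd (B 0, …, B i)`, the sequence of greatest common divisors. -/
def Ebar (B : ℕ → ℕ) (i : ℕ) : ℕ := (Finset.range (i + 1)).gcd B

/-- The generators of the semigroup:
`B̄ 0 = B 0` and `B̄ i = B i + Σ_{k=1}^{i-1} ((E (k-1) - E k) / E (i-1)) * B k` for `i ≥ 1`. -/
def Bbar (B : ℕ → ℕ) (i : ℕ) : ℕ :=
  if i = 0 then B 0
  else B i + ∑ k ∈ Finset.Ico 1 i, ((Ebar B (k - 1) - Ebar B k) / Ebar B (i - 1)) * B k

/-- `B̄ i` as an extended natural number, with the convention `B̄ (G + 1) = ∞`. -/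
def BbarTop (G : ℕ) (B : ℕ → ℕ) (i : ℕ) : ℕ∞ :=
  if i ≤ G then (Bbar B i : ℕ∞) else ⊤

/-- `q` is a `k`-semiroot of the branch parameterized by `X = T ^ N`, `Y = y (T)` with
characteristic sequence `B 0, …, B G`:  `q` is monic of `Y`-degree `N / E k` and the
intersection number `(f, q)`, i.e. the `T`-adic order of `q (T ^ N, y (T))`, equals
`B̄ (k+1)` (which is `∞` for `k = G`). -/
def IsSemiroot (N : ℕ) (y : PowerSeries ℂ) (G : ℕ) (B : ℕ → ℕ) (k : ℕ)
    (q : Polynomial (PowerSeries ℂ)) : Prop :=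
  q.Monic ∧ q.natDegree = N / Ebar B k ∧ (evalCurve N y q).order = BbarTop G B (k + 1)


section Aux

open PowerSeries Finset

lemma coeff_substPow (n j : ℕ) (σ : PowerSeries ℂ) :
    coeff j (substPow n σ) = if n ∣ j then coeff (j / n) σ else 0 := by
  simp [substPow]

lemma substPow_add (n : ℕ) (α β : PowerSeries ℂ) :
    substPow n (α + β) = substPow n α + substPow n β := by
  ext j; simp only [coeff_substPow, map_add]; split <;> simp

lemma substPow_sub (n : ℕ) (α β : PowerSeries ℂ) :
    substPow n (α - β) = substPow n α - substPow n β := by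
  ext j; simp only [coeff_substPow, map_sub]; split <;> simp

lemma substPow_zero (n : ℕ) : substPow n 0 = 0 := by
  ext j; simp [coeff_substPow]

lemma substPow_one (n : ℕ) (hn : 0 < n) : substPow n 1 = 1 := by
  ext j
  by_cases h : n ∣ j
  · obtain ⟨t, rfl⟩ := h
    simp [coeff_substPow, Nat.mul_div_cancel_left _ hn, PowerSeries.coeff_one,
      Nat.mul_eq_zero, hn.ne']
  · have hj : j ≠ 0 := by rintro rfl; exact h (dvd_zero n)
    simp [coeff_substPow, h, PowerSeries.coeff_one, hj]

lemma substPow_mul (n : ℕ) (hn : 0 < n) (α β : PowerSeries ℂ) :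
    substPow n (α * β) = substPow n α * substPow n β := by
  ext j
  rw [PowerSeries.coeff_mul]
  simp only [coeff_substPow]
  by_cases hj : n ∣ j
  · rw [if_pos hj, PowerSeries.coeff_mul]
    obtain ⟨t, rfl⟩ := hj
    rw [Nat.mul_div_cancel_left t hn]
    have hinj : Set.InjOn (fun r : ℕ × ℕ => (n * r.1, n * r.2)) (antidiagonal t) := by
      intro a _ b _ h
      simp only [Prod.mk.injEq] at h
      exact Prod.ext (Nat.eq_of_mul_eq_mul_left hn h.1) (Nat.eq_of_mul_eq_mul_left hn h.2)
    rw [show (∑ x ∈ antidiagonal t, coeff x.1 α * coeff x.2 β)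
        = ∑ p ∈ (antidiagonal t).image (fun r : ℕ × ℕ => (n * r.1, n * r.2)),
          (if n ∣ p.1 then coeff (p.1 / n) α else 0) *
          (if n ∣ p.2 then coeff (p.2 / n) β else 0) from ?_]
    · apply Finset.sum_subset
      · intro p hp
        simp only [mem_image] at hp
        obtain ⟨r, hr, rfl⟩ := hp
        rw [Finset.HasAntidiagonal.mem_antidiagonal] at hr
        rw [Finset.HasAntidiagonal.mem_antidiagonal]
        show n * r.1 + n * r.2 = n * t
        rw [← Nat.mul_add, hr]
      · intro p hp hnp
        rw [Finset.HasAntidiagonal.mem_antidiagonal] at hp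
        by_cases h1 : n ∣ p.1
        · by_cases h2 : n ∣ p.2
          · exfalso
            apply hnp
            simp only [mem_image]
            obtain ⟨u, hu⟩ := h1
            obtain ⟨v, hv⟩ := h2
            refine ⟨(p.1 / n, p.2 / n), ?_, ?_⟩
            · rw [Finset.HasAntidiagonal.mem_antidiagonal]
              show p.1 / n + p.2 / n = t
              rw [hu, hv, Nat.mul_div_cancel_left _ hn, Nat.mul_div_cancel_left _ hn]
              apply Nat.eq_of_mul_eq_mul_left hn
              rw [Nat.mul_add]
              omega
            · show (n * (p.1 / n), n * (p.2 / n)) = p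
              rw [hu, hv, Nat.mul_div_cancel_left _ hn, Nat.mul_div_cancel_left _ hn]
              exact (Prod.ext hu.symm hv.symm)
          · rw [if_neg h2, mul_zero]
        · rw [if_neg h1, zero_mul]
    · rw [Finset.sum_image hinj]
      congr 1
      ext r
      rw [if_pos (Dvd.intro _ rfl), if_pos (Dvd.intro _ rfl),
        Nat.mul_div_cancel_left _ hn, Nat.mul_div_cancel_left _ hn]
  · rw [if_neg hj]
    symm
    apply Finset.sum_eq_zero
    intro p hp
    rw [Finset.HasAntidiagonal.mem_antidiagonal] at hp
    by_cases h1 : n ∣ p.1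
    · rw [if_neg (fun h2 => hj (hp ▸ Nat.dvd_add h1 h2)), mul_zero]
    · rw [if_neg h1, zero_mul]

/-- `substPow` as a ring homomorphism. -/
def substPowHom (n : ℕ) (hn : 0 < n) : PowerSeries ℂ →+* PowerSeries ℂ where
  toFun := substPow n
  map_one' := substPow_one n hn
  map_mul' := substPow_mul n hn
  map_zero' := substPow_zero n
  map_add' := substPow_add n

lemma substPowHom_apply (n : ℕ) (hn : 0 < n) (σ : PowerSeries ℂ) :
    substPowHom n hn σ = substPow n σ := rfl

lemma substPow_substPow (a b : ℕ) (ha : 0 < a) (σ : PowerSeries ℂ) :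
    substPow a (substPow b σ) = substPow (a * b) σ := by
  ext j
  simp only [coeff_substPow]
  by_cases hja : a ∣ j
  · rw [if_pos hja]
    by_cases hjb : b ∣ j / a
    · rw [if_pos hjb, if_pos, Nat.div_div_eq_div_mul]
      obtain ⟨u, hu⟩ := hja
      obtain ⟨v, hv⟩ := hjb
      rw [hu] at hv ⊢
      rw [Nat.mul_div_cancel_left _ ha] at hv
      rw [hv, ← Nat.mul_assoc]
      exact dvd_mul_right _ _
    · rw [if_neg hjb, if_neg]
      intro hab
      apply hjb
      obtain ⟨v, hv⟩ := hab
      rw [hv, Nat.mul_assoc, Nat.mul_div_cancel_left _ ha]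
      exact Dvd.intro v rfl
  · rw [if_neg hja, if_neg]
    intro hab
    exact hja (dvd_trans (Dvd.intro b rfl) hab)

lemma rescale_substPow (n : ℕ) (η : ℂ) (hη : η ^ n = 1) (σ : PowerSeries ℂ) :
    PowerSeries.rescale η (substPow n σ) = substPow n σ := by
  ext j
  rw [PowerSeries.coeff_rescale]
  simp only [coeff_substPow]
  by_cases h : n ∣ j
  · obtain ⟨t, rfl⟩ := h
    rw [pow_mul, hη, one_pow, one_mul]
  · rw [if_neg h, mul_zero]

lemma order_substPow_eq (n c : ℕ) (hn : 0 < n) (σ : PowerSeries ℂ)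
    (h : σ.order = (c : ℕ∞)) : (substPow n σ).order = ((n * c : ℕ) : ℕ∞) := by
  rw [PowerSeries.order_eq_nat] at h ⊢
  constructor
  · rw [coeff_substPow, if_pos (Dvd.intro c rfl), Nat.mul_div_cancel_left _ hn]
    exact h.1
  · intro i hi
    rw [coeff_substPow]
    by_cases hd : n ∣ i
    · rw [if_pos hd]
      apply h.2
      obtain ⟨s, rfl⟩ := hd
      rw [Nat.mul_div_cancel_left _ hn]
      exact lt_of_mul_lt_mul_left hi (Nat.zero_le n)
    · rw [if_neg hd]

lemma evalCurve_eq (n : ℕ) (hn : 0 < n) (w : PowerSeries ℂ)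
    (φ : Polynomial (PowerSeries ℂ)) :
    evalCurve n w φ = φ.eval₂ (substPowHom n hn) w := by
  rw [Polynomial.eval₂_eq_sum_range]
  rfl

lemma order_finset_prod {ι : Type*} (s : Finset ι) (f : ι → PowerSeries ℂ) :
    (∏ x ∈ s, f x).order = ∑ x ∈ s, (f x).order := by
  classical
  induction s using Finset.cons_induction with
  | empty => simp [PowerSeries.order_one]
  | cons a s ha ih =>
      rw [Finset.prod_cons, Finset.sum_cons, PowerSeries.order_mul, ih]


/-- **The coincidence order of a branch with its semiroots.**
For `0 ≤ k ≤ G - 1`, let `q` be a `k`-semiroot of `f`, with primitive Newton–Puiseux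
parameterization `X = U ^ (N / E k)`, `Y = w (U)`.  Then the coincidence order of `f` and
`q` equals `B (k+1) / N`:  the maximum over `N`-th roots of unity `ω` and
`(N / E k)`-th roots of unity `ω'` of `ord_S (y (ω S ^ (N / E k)) - w (ω' S ^ N))` is
exactly `(N / E k) * B (k+1)`; equivalently, `f` and `q` have equal sets of
`k`-truncated Newton–Puiseux series. -/
theorem stmt_15 (f : Polynomial (PowerSeries ℂ)) (N G : ℕ) (B : ℕ → ℕ) (y : PowerSeries ℂ)
    (hN : 1 ≤ N) (hmonic : f.Monic) (hdeg : f.natDegree = N) (hirr : Irreducible f)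
    (h00 : PowerSeries.constantCoeff (Polynomial.eval 0 f) = 0)
    (hparam : IsNPParam f N y) (hchar : IsCharSeq N y G B)
    (k : ℕ) (hk : k < G) (q : Polynomial (PowerSeries ℂ))
    (hq : IsSemiroot N y G B k q) (w : PowerSeries ℂ)
    (hw : IsNPParam q (N / Ebar B k) w) :
    (∃ ω ω' : ℂ, ω ^ N = 1 ∧ ω' ^ (N / Ebar B k) = 1 ∧
      (substPow (N / Ebar B k) (PowerSeries.rescale ω y) -
        substPow N (PowerSeries.rescale ω' w)).order =
          (((N / Ebar B k) * B (k + 1) : ℕ) : ℕ∞)) ∧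
    ∀ ω ω' : ℂ, ω ^ N = 1 → ω' ^ (N / Ebar B k) = 1 →
      (substPow (N / Ebar B k) (PowerSeries.rescale ω y) -
        substPow N (PowerSeries.rescale ω' w)).order ≤
          (((N / Ebar B k) * B (k + 1) : ℕ) : ℕ∞) := by
  classical
  obtain ⟨hy0, hy1, hyprim⟩ := hparam
  obtain ⟨hB0, hBinf, hEG, hEne⟩ := hchar
  obtain ⟨hqmon, hqdeg, hqord⟩ := hq
  obtain ⟨hw0, hw1, hwprim⟩ := hw
  have hNpos : 0 < N := hN
  have hEdvdN : Ebar B k ∣ N := by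
    have h0 : Ebar B k ∣ B 0 := Finset.gcd_dvd (Finset.mem_range.mpr (Nat.succ_pos k))
    rwa [hB0] at h0
  have hEpos : 0 < Ebar B k := by
    rcases Nat.eq_zero_or_pos (Ebar B k) with h | h
    · rw [h, zero_dvd_iff] at hEdvdN; omega
    · exact h
  have hEne1 : Ebar B k ≠ 1 := hEne k hk
  have hmE : (N / Ebar B k) * Ebar B k = N := Nat.div_mul_cancel hEdvdN
  have hmpos : 0 < N / Ebar B k := Nat.div_pos (Nat.le_of_dvd hNpos hEdvdN) hEpos
  have hk1G : k + 1 ≤ G := hk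
  -- spec of B (k+1)
  have hSne : {j : ℕ | (coeff j) y ≠ 0 ∧ ¬ Ebar B k ∣ j}.Nonempty := by
    by_contra hcon
    apply hEne1
    apply hyprim (Ebar B k) hEdvdN
    intro j hj
    by_contra hd
    exact hcon ⟨j, hj, hd⟩
  have hBk1eq : B (k + 1) = sInf {j : ℕ | (coeff j) y ≠ 0 ∧ ¬ Ebar B k ∣ j} :=
    hBinf (k + 1) (by omega) hk1G
  have hmem : (coeff (B (k + 1))) y ≠ 0 ∧ ¬ Ebar B k ∣ B (k + 1) := by
    rw [hBk1eq]; exact Nat.sInf_mem hSne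
  -- spec of B i, 1 ≤ i ≤ k
  have hBimem : ∀ i, 1 ≤ i → i ≤ k → (coeff (B i)) y ≠ 0 ∧ ¬ Ebar B (i - 1) ∣ B i := by
    intro i h1 h2
    have hdvdN : Ebar B (i - 1) ∣ N := by
      have h0 : Ebar B (i - 1) ∣ B 0 := Finset.gcd_dvd (Finset.mem_range.mpr (Nat.succ_pos _))
      rwa [hB0] at h0
    have hne1 : Ebar B (i - 1) ≠ 1 := hEne _ (by omega)
    have hne : {j : ℕ | (coeff j) y ≠ 0 ∧ ¬ Ebar B (i - 1) ∣ j}.Nonempty := by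
      by_contra hcon
      apply hne1
      apply hyprim _ hdvdN
      intro j hj
      by_contra hd
      exact hcon ⟨j, hj, hd⟩
    have heq := hBinf i h1 (by omega)
    rw [show Finset.range i = Finset.range ((i - 1) + 1) by congr 1; omega] at heq
    rw [show ((Finset.range ((i-1)+1)).gcd B : ℕ) = Ebar B (i-1) from rfl] at heq
    rw [heq]
    exact Nat.sInf_mem hne
  -- roots of unity
  set RR : Finset ℂ := Polynomial.nthRootsFinset (N / Ebar B k) (1 : ℂ) with hRRdef
  have hcard : RR.card = N / Ebar B k :=
    (Complex.isPrimitiveRoot_exp _ hmpos.ne').card_nthRootsFinset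
  have hmemRR : ∀ η ∈ RR, η ^ (N / Ebar B k) = 1 := fun η hη =>
    (Polynomial.mem_nthRootsFinset hmpos 1).mp hη
  have hneRR : ∀ η ∈ RR, η ≠ 0 := fun η hη => Polynomial.ne_zero_of_mem_nthRootsFinset one_ne_zero hη
  -- the factorization of q(T^N, y)
  have hEvalFac : evalCurve N y q
      = ∏ η ∈ RR, (y - substPow (Ebar B k) (PowerSeries.rescale η w)) := by
    set Q : Polynomial (PowerSeries ℂ) := q.map (substPowHom (N / Ebar B k) hmpos) with hQdef
    have hQmonic : Q.Monic := hqmon.map _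
    have hQdeg : Q.natDegree = N / Ebar B k := by
      rw [hQdef, hqmon.natDegree_map, hqdeg]
    have hroot : ∀ η ∈ RR, Q.eval (PowerSeries.rescale η w) = 0 := by
      intro η hη
      have h1 : Q.eval w = 0 := by
        rw [hQdef, Polynomial.eval_map, ← evalCurve_eq _ hmpos]
        exact hw0
      have h2 := congrArg (PowerSeries.rescale η) h1
      rw [map_zero, hQdef, Polynomial.eval_map, Polynomial.hom_eval₂] at h2
      have hcomp : (PowerSeries.rescale η).comp (substPowHom (N / Ebar B k) hmpos)
          = substPowHom (N / Ebar B k) hmpos := by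
        apply RingHom.ext
        intro σ
        exact rescale_substPow _ η (hmemRR η hη) σ
      rw [hcomp] at h2
      rw [hQdef, Polynomial.eval_map]
      exact h2
    have hinj : Set.InjOn (fun η => PowerSeries.rescale η w) RR := by
      intro η hη η' hη' hEq
      simp only at hEq
      have hη'ne : η' ≠ 0 := hneRR η' hη'
      have hζm : (η * η'⁻¹) ^ (N / Ebar B k) = 1 := by
        rw [mul_pow, inv_pow, hmemRR η hη, hmemRR η' hη', inv_one, mul_one]
      have hd : ∀ j, (coeff j) w ≠ 0 → orderOf (η * η'⁻¹) ∣ j := by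
        intro j hj
        rw [orderOf_dvd_iff_pow_eq_one]
        have hc := congrArg (coeff j) hEq
        rw [PowerSeries.coeff_rescale, PowerSeries.coeff_rescale] at hc
        have hpow : η ^ j = η' ^ j := mul_right_cancel₀ hj hc
        rw [mul_pow, inv_pow, hpow, mul_inv_cancel₀ (pow_ne_zero _ hη'ne)]
      have h1 : orderOf (η * η'⁻¹) = 1 :=
        hwprim _ (orderOf_dvd_iff_pow_eq_one.mpr hζm) hd
      exact (mul_inv_eq_one₀ hη'ne).mp (orderOf_eq_one_iff.mp h1)
    have hPmon : (∏ η ∈ RR, (Polynomial.X - Polynomial.C (PowerSeries.rescale η w))).Monic :=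
      Polynomial.monic_prod_of_monic _ _ (fun η _ => Polynomial.monic_X_sub_C _)
    have hPdeg : (∏ η ∈ RR,
        (Polynomial.X - Polynomial.C (PowerSeries.rescale η w))).natDegree = N / Ebar B k := by
      rw [Polynomial.natDegree_prod_of_monic _ _ (fun η _ => Polynomial.monic_X_sub_C _)]
      simp [Polynomial.natDegree_X_sub_C, hcard]
    have hprod : Q = ∏ η ∈ RR, (Polynomial.X - Polynomial.C (PowerSeries.rescale η w)) := by
      rw [← sub_eq_zero]
      apply Polynomial.eq_zero_of_natDegree_lt_card_of_eval_eq_zero' _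
        (RR.image (fun η => PowerSeries.rescale η w))
      · intro z hz
        simp only [Finset.mem_image] at hz
        obtain ⟨η, hη, rfl⟩ := hz
        rw [Polynomial.eval_sub, hroot η hη, Polynomial.eval_prod,
          Finset.prod_eq_zero hη (by simp), sub_zero]
      · rw [Finset.card_image_of_injOn hinj, hcard]
        rcases eq_or_ne (Q - ∏ η ∈ RR,
            (Polynomial.X - Polynomial.C (PowerSeries.rescale η w))) 0 with h0 | h0
        · rw [h0]
          simpa using hmpos
        · have hdlt : (Q - ∏ η ∈ RR,
              (Polynomial.X - Polynomial.C (PowerSeries.rescale η w))).degree < Q.degree := by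
            apply Polynomial.degree_sub_lt
            · rw [Polynomial.degree_eq_natDegree hQmonic.ne_zero,
                Polynomial.degree_eq_natDegree hPmon.ne_zero, hQdeg, hPdeg]
            · exact hQmonic.ne_zero
            · rw [hQmonic.leadingCoeff, hPmon.leadingCoeff]
          have := Polynomial.natDegree_lt_natDegree h0 hdlt
          omega
    have hcomp2 : (substPowHom (Ebar B k) hEpos).comp (substPowHom (N / Ebar B k) hmpos)
        = substPowHom N hNpos := by
      apply RingHom.ext
      intro σ
      show substPow (Ebar B k) (substPow (N / Ebar B k) σ) = substPow N σ
      rw [substPow_substPow _ _ hEpos, Nat.mul_comm, hmE]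
    rw [evalCurve_eq N hNpos, ← hcomp2, ← Polynomial.eval₂_map]
    rw [show q.map (substPowHom (N / Ebar B k) hmpos) = Q from rfl, hprod,
      Polynomial.eval₂_finset_prod]
    apply Finset.prod_congr rfl
    intro η hη
    rw [Polynomial.eval₂_sub, Polynomial.eval₂_X, Polynomial.eval₂_C]
    rfl
  -- order bookkeeping
  have hDcoeff : ∀ η : ℂ,
      (coeff (B (k + 1))) (y - substPow (Ebar B k) (PowerSeries.rescale η w)) ≠ 0 := by
    intro η
    rw [map_sub, coeff_substPow, if_neg hmem.2, sub_zero]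
    exact hmem.1
  have hDle : ∀ η : ℂ,
      (y - substPow (Ebar B k) (PowerSeries.rescale η w)).order ≤ (B (k + 1) : ℕ∞) :=
    fun η => PowerSeries.order_le _ (hDcoeff η)
  have hDfin : ∀ η : ℂ,
      (y - substPow (Ebar B k) (PowerSeries.rescale η w)).order ≠ ⊤ :=
    fun η => ne_top_of_le_ne_top (by simp) (hDle η)
  set nn : ℂ → ℕ :=
    fun η => ((y - substPow (Ebar B k) (PowerSeries.rescale η w)).order).toNat with hnndef
  have hnn_eq : ∀ η : ℂ,
      ((nn η : ℕ) : ℕ∞) = (y - substPow (Ebar B k) (PowerSeries.rescale η w)).order :=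
    fun η => ENat.coe_toNat (hDfin η)
  have hnn_le : ∀ η : ℂ, nn η ≤ B (k + 1) := by
    intro η
    have h := hDle η
    rw [← hnn_eq η] at h
    exact_mod_cast h
  have hordsum : ∑ η ∈ RR, (y - substPow (Ebar B k) (PowerSeries.rescale η w)).order
      = ((Bbar B (k + 1) : ℕ) : ℕ∞) := by
    rw [← order_finset_prod, ← hEvalFac, hqord, BbarTop, if_pos hk1G]
  have hsum_nat : ∑ η ∈ RR, nn η = Bbar B (k + 1) := by
    have hcast : ((∑ η ∈ RR, nn η : ℕ) : ℕ∞) = ((Bbar B (k + 1) : ℕ) : ℕ∞) := by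
      rw [Nat.cast_sum, Finset.sum_congr rfl (fun η _ => hnn_eq η)]
      exact hordsum
    exact_mod_cast hcast
  have hRRne : RR.Nonempty := Finset.card_pos.mp (by rw [hcard]; exact hmpos)
  obtain ⟨η₀, hη₀RR, hη₀max⟩ := Finset.exists_max_image RR nn hRRne
  have hη₀ne : η₀ ≠ 0 := hneRR η₀ hη₀RR
  -- the key squeeze
  have hmax_eq : nn η₀ = B (k + 1) := by
    have hEdvdBi : ∀ i, i ≤ k → Ebar B k ∣ B i := fun i hi =>
      Finset.gcd_dvd (Finset.mem_range.mpr (by omega))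
    have hEdvdEi : ∀ i, i ≤ k → Ebar B k ∣ Ebar B i := by
      intro i hi
      apply Finset.dvd_gcd
      intro l hl
      rw [Finset.mem_range] at hl
      exact hEdvdBi l (by omega)
    have hEidvdN : ∀ i : ℕ, Ebar B i ∣ N := by
      intro i
      have h0 : Ebar B i ∣ B 0 := Finset.gcd_dvd (Finset.mem_range.mpr (Nat.succ_pos i))
      rwa [hB0] at h0
    have hEipos : ∀ i : ℕ, 0 < Ebar B i := fun i => Nat.pos_of_dvd_of_pos (hEidvdN i) hNpos
    have hrE : ∀ i, i ≤ k → (Ebar B i / Ebar B k) * Ebar B k = Ebar B i :=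
      fun i hi => Nat.div_mul_cancel (hEdvdEi i hi)
    have hrpos : ∀ i, i ≤ k → 0 < Ebar B i / Ebar B k :=
      fun i hi => Nat.div_pos (Nat.le_of_dvd (hEipos i) (hEdvdEi i hi)) hEpos
    have hrdvdm : ∀ i, i ≤ k → (Ebar B i / Ebar B k) ∣ (N / Ebar B k) := by
      intro i hi
      obtain ⟨s, hs⟩ := hEidvdN i
      obtain ⟨t, ht⟩ := hEdvdEi i hi
      refine ⟨s, ?_⟩
      rw [hs, ht, Nat.mul_assoc, Nat.mul_div_cancel_left _ hEpos,
        Nat.mul_div_cancel_left _ hEpos]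
    set dd : ℂ → ℕ := fun η => orderOf (η * η₀⁻¹) with hdddef
    set II : ℂ → ℕ := fun η => sInf {i : ℕ | ¬ (dd η * Ebar B k) ∣ B i} with hIIdef
    have hζRR : ∀ η ∈ RR.erase η₀, (η * η₀⁻¹) ^ (N / Ebar B k) = 1 := by
      intro η hη
      rw [mul_pow, inv_pow, hmemRR η (Finset.mem_of_mem_erase hη),
        hmemRR η₀ hη₀RR, inv_one, mul_one]
    have hdd_dvd : ∀ η ∈ RR.erase η₀, dd η ∣ N / Ebar B k := by
      intro η hη
      rw [hdddef]
      exact orderOf_dvd_iff_pow_eq_one.mpr (hζRR η hη)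
    have hddpow : ∀ η : ℂ, (η * η₀⁻¹) ^ dd η = 1 := by
      intro η
      rw [hdddef]
      exact pow_orderOf_eq_one _
    have hdd_pos : ∀ η ∈ RR.erase η₀, 0 < dd η := by
      intro η hη
      rw [hdddef]
      rw [show (fun η => orderOf (η * η₀⁻¹)) η = orderOf (η * η₀⁻¹) from rfl, orderOf_pos_iff]
      exact isOfFinOrder_iff_pow_eq_one.mpr ⟨_, hmpos, hζRR η hη⟩
    have hdd_ne1 : ∀ η ∈ RR.erase η₀, dd η ≠ 1 := by
      intro η hη h1
      rw [hdddef] at h1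
      have h2 : η * η₀⁻¹ = 1 := orderOf_eq_one_iff.mp h1
      exact (Finset.mem_erase.mp hη).1 ((mul_inv_eq_one₀ hη₀ne).mp h2)
    have hIIne : ∀ η ∈ RR.erase η₀, {i : ℕ | ¬ (dd η * Ebar B k) ∣ B i}.Nonempty := by
      intro η hη
      by_contra hcon
      have hall : ∀ i, (dd η * Ebar B k) ∣ B i := by
        intro i
        by_contra hd
        exact hcon ⟨i, hd⟩
      have hdvdE : (dd η * Ebar B k) ∣ Ebar B k := Finset.dvd_gcd (fun l _ => hall l)
      have h4 := Nat.le_of_dvd hEpos hdvdE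
      have h2 := hdd_pos η hη
      have h3 := hdd_ne1 η hη
      have h5 : 2 ≤ dd η := by omega
      have h6 : 2 * Ebar B k ≤ dd η * Ebar B k := Nat.mul_le_mul_right _ h5
      omega
    have hIImem : ∀ η ∈ RR.erase η₀, ¬ (dd η * Ebar B k) ∣ B (II η) := by
      intro η hη
      rw [hIIdef]
      exact Nat.sInf_mem (hIIne η hη)
    have hIIlow : ∀ η ∈ RR.erase η₀, ∀ l, l < II η → (dd η * Ebar B k) ∣ B l := by
      intro η hη l hl
      simp only [hIIdef] at hl
      by_contra hd
      have h2 : sInf {i : ℕ | ¬ (dd η * Ebar B k) ∣ B i} ≤ l := Nat.sInf_le hd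
      omega
    have hII1 : ∀ η ∈ RR.erase η₀, 1 ≤ II η := by
      intro η hη
      rcases Nat.eq_zero_or_pos (II η) with h0 | h
      · exfalso
        apply hIImem η hη
        rw [h0, hB0, ← hmE]
        obtain ⟨u, hu⟩ := hdd_dvd η hη
        exact ⟨u, by rw [hu]; ring⟩
      · exact h
    have hIIk : ∀ η ∈ RR.erase η₀, II η ≤ k := by
      intro η hη
      by_contra hcon
      have hdvdE : (dd η * Ebar B k) ∣ Ebar B k := by
        apply Finset.dvd_gcd
        intro l hl
        rw [Finset.mem_range] at hl
        exact hIIlow η hη l (by omega)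
      have h4 := Nat.le_of_dvd hEpos hdvdE
      have h2 := hdd_pos η hη
      have h3 := hdd_ne1 η hη
      have h5 : 2 ≤ dd η := by omega
      have h6 : 2 * Ebar B k ≤ dd η * Ebar B k := Nat.mul_le_mul_right _ h5
      omega
    -- the per-conjugate bound
    have hbound : ∀ η ∈ RR.erase η₀, nn η ≤ B (II η) := by
      intro η hη
      have hηRR := Finset.mem_of_mem_erase hη
      rcases le_or_gt (nn η₀) (B (II η)) with hcase | hcase
      · exact le_trans (hη₀max η hηRR) hcase
      · have hIk := hIIk η hη
        have hI1 := hII1 η hη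
        obtain ⟨j, hj⟩ := hEdvdBi (II η) hIk
        have hc0 : (coeff (B (II η)))
            (y - substPow (Ebar B k) (PowerSeries.rescale η₀ w)) = 0 := by
          apply PowerSeries.coeff_of_lt_order
          rw [← hnn_eq η₀]
          exact_mod_cast hcase
        rw [map_sub, sub_eq_zero] at hc0
        have hwj : (coeff (B (II η))) (substPow (Ebar B k) (PowerSeries.rescale η₀ w))
            = η₀ ^ j * (coeff j) w := by
          rw [coeff_substPow, if_pos ⟨j, hj⟩, hj, Nat.mul_div_cancel_left _ hEpos,
            PowerSeries.coeff_rescale]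
        have haβ : (coeff (B (II η))) y ≠ 0 := (hBimem (II η) hI1 hIk).1
        have hwne : (coeff j) w ≠ 0 := by
          intro h0
          apply haβ
          rw [hc0, hwj, h0, mul_zero]
        have hpowne : η₀ ^ j ≠ η ^ j := by
          intro hEq
          apply hIImem η hη
          have hζj : (η * η₀⁻¹) ^ j = 1 := by
            rw [mul_pow, inv_pow, ← hEq, mul_inv_cancel₀ (pow_ne_zero _ hη₀ne)]
          have hdj : dd η ∣ j := by
            rw [hdddef]
            exact orderOf_dvd_iff_pow_eq_one.mpr hζj
          obtain ⟨u, hu⟩ := hdj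
          exact ⟨u, by rw [hj, hu]; ring⟩
        have hcne : (coeff (B (II η)))
            (y - substPow (Ebar B k) (PowerSeries.rescale η w)) ≠ 0 := by
          rw [map_sub, hc0, hwj, coeff_substPow, if_pos ⟨j, hj⟩, hj,
            Nat.mul_div_cancel_left _ hEpos, PowerSeries.coeff_rescale]
          intro h0
          exact hpowne (mul_right_cancel₀ hwne (sub_eq_zero.mp h0))
        have hle := PowerSeries.order_le _ hcne
        rw [← hnn_eq η] at hle
        exact_mod_cast hle
    -- characterization of the level sets
    have hchar_iff : ∀ η ∈ RR.erase η₀, ∀ i, 1 ≤ i → i ≤ k + 1 →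
        (i ≤ II η ↔ η ^ (Ebar B (i-1) / Ebar B k) = η₀ ^ (Ebar B (i-1) / Ebar B k)) := by
      intro η hη i h1 h2
      have hik : i - 1 ≤ k := by omega
      constructor
      · intro hle
        have hdvdE : (dd η * Ebar B k) ∣ Ebar B (i-1) := by
          apply Finset.dvd_gcd
          intro l hl
          rw [Finset.mem_range] at hl
          exact hIIlow η hη l (by omega)
        obtain ⟨t, ht⟩ := hdvdE
        have hr : Ebar B (i-1) / Ebar B k = dd η * t := by
          rw [ht, show dd η * Ebar B k * t = Ebar B k * (dd η * t) by ring]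
          exact Nat.mul_div_cancel_left _ hEpos
        have hζ1 : (η * η₀⁻¹) ^ (Ebar B (i-1) / Ebar B k) = 1 := by
          rw [hr, pow_mul, hddpow η, one_pow]
        rw [mul_pow, inv_pow] at hζ1
        exact (mul_inv_eq_one₀ (pow_ne_zero _ hη₀ne)).mp hζ1
      · intro hpow
        by_contra hcon
        push_neg at hcon
        have hζ1 : (η * η₀⁻¹) ^ (Ebar B (i-1) / Ebar B k) = 1 := by
          rw [mul_pow, inv_pow, hpow, mul_inv_cancel₀ (pow_ne_zero _ hη₀ne)]
        have hdr : dd η ∣ Ebar B (i-1) / Ebar B k := by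
          rw [hdddef]
          exact orderOf_dvd_iff_pow_eq_one.mpr hζ1
        obtain ⟨u, hu⟩ := hdr
        have hdE : (dd η * Ebar B k) ∣ Ebar B (i-1) := by
          refine ⟨u, ?_⟩
          rw [← hrE (i-1) hik, hu]
          ring
        apply hIImem η hη
        have hEB : Ebar B (i-1) ∣ B (II η) :=
          Finset.gcd_dvd (Finset.mem_range.mpr (by omega))
        exact dvd_trans hdE hEB
    -- cardinality of the level sets
    have hFcard : ∀ i, i ≤ k →
        (RR.filter (fun η => η ^ (Ebar B i / Ebar B k) = η₀ ^ (Ebar B i / Ebar B k))).card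
          = Ebar B i / Ebar B k := by
      intro i hi
      have hrp : 0 < Ebar B i / Ebar B k := hrpos i hi
      have hb : (RR.filter (fun η => η ^ (Ebar B i / Ebar B k)
            = η₀ ^ (Ebar B i / Ebar B k))).card
          = (Polynomial.nthRootsFinset (Ebar B i / Ebar B k) (1 : ℂ)).card := by
        apply Finset.card_bij (fun η _ => η * η₀⁻¹)
        · intro η hη
          rw [Finset.mem_filter] at hη
          rw [Polynomial.mem_nthRootsFinset hrp, mul_pow, inv_pow, hη.2,
            mul_inv_cancel₀ (pow_ne_zero _ hη₀ne)]
        · intro η hη η' hη' hEq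
          exact mul_right_cancel₀ (inv_ne_zero hη₀ne) hEq
        · intro ζ hζ
          rw [Polynomial.mem_nthRootsFinset hrp] at hζ
          refine ⟨ζ * η₀, ?_, ?_⟩
          · rw [Finset.mem_filter]
            constructor
            · rw [hRRdef, Polynomial.mem_nthRootsFinset hmpos, mul_pow,
                hmemRR η₀ hη₀RR, mul_one]
              obtain ⟨u, hu⟩ := hrdvdm i hi
              rw [hu, pow_mul, hζ, one_pow]
            · rw [mul_pow, hζ, one_mul]
          · rw [mul_inv_cancel_right₀ hη₀ne]
      rw [hb, (Complex.isPrimitiveRoot_exp _ hrp.ne').card_nthRootsFinset]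
    have hstep : ∀ i, 1 ≤ i → i ≤ k + 1 →
        ((RR.erase η₀).filter (fun η => i ≤ II η)).card
          = Ebar B (i-1) / Ebar B k - 1 := by
      intro i h1 h2
      have hik : i - 1 ≤ k := by omega
      have hAeq : (RR.erase η₀).filter (fun η => i ≤ II η)
          = (RR.filter (fun η => η ^ (Ebar B (i-1) / Ebar B k)
              = η₀ ^ (Ebar B (i-1) / Ebar B k))).erase η₀ := by
        ext η
        simp only [Finset.mem_filter, Finset.mem_erase]
        constructor
        · rintro ⟨⟨hne, hηRR⟩, hle⟩
          exact ⟨hne, hηRR,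
            (hchar_iff η (Finset.mem_erase.mpr ⟨hne, hηRR⟩) i h1 h2).mp hle⟩
        · rintro ⟨hne, hηRR, hpow⟩
          exact ⟨⟨hne, hηRR⟩,
            (hchar_iff η (Finset.mem_erase.mpr ⟨hne, hηRR⟩) i h1 h2).mpr hpow⟩
      rw [hAeq, Finset.card_erase_of_mem, hFcard (i-1) hik]
      rw [Finset.mem_filter]
      exact ⟨hη₀RR, rfl⟩
    have hmono : ∀ i, 1 ≤ i → i ≤ k →
        Ebar B i / Ebar B k ≤ Ebar B (i-1) / Ebar B k := by
      intro i h1 h2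
      apply Nat.div_le_div_right
      have hdvd : Ebar B i ∣ Ebar B (i-1) := by
        apply Finset.dvd_gcd
        intro l hl
        rw [Finset.mem_range] at hl
        exact Finset.gcd_dvd (Finset.mem_range.mpr (by omega))
      exact Nat.le_of_dvd (hEipos _) hdvd
    have hfiber : ∀ i, 1 ≤ i → i ≤ k →
        ((RR.erase η₀).filter (fun η => II η = i)).card
          = Ebar B (i-1) / Ebar B k - Ebar B i / Ebar B k := by
      intro i h1 h2
      have hunion : (RR.erase η₀).filter (fun η => i ≤ II η)
          = ((RR.erase η₀).filter (fun η => II η = i))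
            ∪ ((RR.erase η₀).filter (fun η => i + 1 ≤ II η)) := by
        ext η
        simp only [Finset.mem_filter, Finset.mem_union]
        constructor
        · rintro ⟨hηA, hle⟩
          rcases eq_or_lt_of_le hle with heq | hlt
          · exact Or.inl ⟨hηA, heq.symm⟩
          · exact Or.inr ⟨hηA, hlt⟩
        · rintro (⟨hηA, heq⟩ | ⟨hηA, hle⟩)
          · exact ⟨hηA, le_of_eq heq.symm⟩
          · exact ⟨hηA, by omega⟩
      have hdisj : Disjoint ((RR.erase η₀).filter (fun η => II η = i))
          ((RR.erase η₀).filter (fun η => i + 1 ≤ II η)) := by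
        rw [Finset.disjoint_left]
        intro η hη1 hη2
        rw [Finset.mem_filter] at hη1 hη2
        omega
      have hc1 := hstep i h1 (by omega)
      have hc2 := hstep (i+1) (by omega) (by omega)
      rw [hunion, Finset.card_union_of_disjoint hdisj] at hc1
      rw [show i + 1 - 1 = i by omega] at hc2
      have hrige := hrpos i h2
      have hr'ge := hrpos (i-1) (by omega)
      have hmge := hmono i h1 h2
      omega
    -- the fiberwise sum
    have hAsum : ∑ η ∈ RR.erase η₀, B (II η)
        = ∑ i ∈ Finset.Ico 1 (k+1), ((Ebar B (i-1) - Ebar B i) / Ebar B k) * B i := by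
      have hmaps : ∀ η ∈ RR.erase η₀, II η ∈ Finset.Ico 1 (k+1) := by
        intro η hη
        rw [Finset.mem_Ico]
        refine ⟨hII1 η hη, ?_⟩
        have := hIIk η hη
        omega
      rw [← Finset.sum_fiberwise_of_maps_to hmaps (fun η => B (II η))]
      apply Finset.sum_congr rfl
      intro i hi
      rw [Finset.mem_Ico] at hi
      have h2 : i ≤ k := by omega
      rw [Finset.sum_congr rfl
          (fun η hη => by rw [(Finset.mem_filter.mp hη).2] : ∀ η ∈ (RR.erase η₀).filter
            (fun η => II η = i), B (II η) = B i),
        Finset.sum_const, smul_eq_mul, hfiber i hi.1 h2]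
      congr 1
      obtain ⟨a, ha⟩ := hEdvdEi (i-1) (by omega)
      obtain ⟨b, hb⟩ := hEdvdEi i h2
      rw [ha, hb, Nat.mul_div_cancel_left _ hEpos, Nat.mul_div_cancel_left _ hEpos,
        ← Nat.mul_sub_left_distrib, Nat.mul_div_cancel_left _ hEpos]
    have hBbarEq : Bbar B (k + 1)
        = B (k+1) + ∑ i ∈ Finset.Ico 1 (k+1),
            ((Ebar B (i-1) - Ebar B i) / Ebar B k) * B i := by
      rw [Bbar, if_neg (Nat.succ_ne_zero k)]
      simp only [Nat.add_sub_cancel]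
    have hsplit : nn η₀ + ∑ η ∈ RR.erase η₀, nn η = Bbar B (k+1) := by
      rw [← hsum_nat]
      exact Finset.add_sum_erase RR nn hη₀RR
    have hle2 : ∑ η ∈ RR.erase η₀, nn η ≤ ∑ η ∈ RR.erase η₀, B (II η) :=
      Finset.sum_le_sum hbound
    have h9 := hnn_le η₀
    omega
  constructor
  · refine ⟨1, η₀, one_pow N, hmemRR η₀ hη₀RR, ?_⟩
    rw [PowerSeries.rescale_one]
    have hsub : substPow N (PowerSeries.rescale η₀ w)
        = substPow (N / Ebar B k) (substPow (Ebar B k) (PowerSeries.rescale η₀ w)) := by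
      rw [substPow_substPow _ _ hmpos, hmE]
    rw [show (RingHom.id (PowerSeries ℂ)) y = y from rfl, hsub, ← substPow_sub]
    exact order_substPow_eq _ _ hmpos _ (by rw [← hnn_eq η₀, hmax_eq])
  · intro ω ω' hω hω'
    have hωne : ω ≠ 0 := by
      rintro rfl
      rw [zero_pow hNpos.ne'] at hω
      simp at hω
    apply PowerSeries.order_le
    rw [map_sub, coeff_substPow, coeff_substPow,
      if_pos (Dvd.intro (B (k + 1)) rfl), Nat.mul_div_cancel_left _ hmpos,
      PowerSeries.coeff_rescale, if_neg, sub_zero]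
    · exact mul_ne_zero (pow_ne_zero _ hωne) hmem.1
    · intro hdvd
      apply hmem.2
      obtain ⟨t, ht⟩ := hdvd
      refine ⟨t, ?_⟩
      apply Nat.eq_of_mul_eq_mul_left hmpos
      rw [ht]
      conv_lhs => rw [← hmE]
      rw [Nat.mul_assoc]

end Aux
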